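/- For a finite set S ⊆ ℤ of negative integers with no two consecutive integers, the sum Σ_{i∈S} φ^i is strictly less than 1. -/

import Mathlib

noncomputable def phi : ℝ := (1 + Real.sqrt 5) / 2

lemma phi_pos : 0 < phi := by
  have h := Real.sqrt_nonneg 5
  unfold phi; linarith

lemma one_lt_phi : 1 < phi := by
  have h : (1:ℝ) < Real.sqrt 5 := by
    have := Real.sq_sqrt (by norm_num : (5:ℝ) ≥ 0)
    nlinarith [Real.sqrt_nonneg 5]
  unfold phi; linarith

lemma phi_sq : phi ^ 2 = phi + 1 := by
  have := Real.sq_sqrt (by norm_num : (5:ℝ) ≥ 0)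
  unfold phi; nlinarith

lemma phi_zpow_add_one (a : ℤ) : phi ^ (a + 1) = phi ^ a + phi ^ (a - 1) := by
  have hne : phi ≠ 0 := ne_of_gt phi_pos
  have h1 : phi ^ (a + 1) = phi ^ (a - 1) * phi ^ (2:ℤ) := by
    rw [← zpow_add₀ hne]; ring_nf
  have h2 : phi ^ (a:ℤ) = phi ^ (a - 1) * phi ^ (1:ℤ) := by
    rw [← zpow_add₀ hne]; ring_nf
  have h3 : phi ^ (2:ℤ) = phi + 1 := by
    rw [show (2:ℤ) = (2:ℕ) by rfl, zpow_natCast, phi_sq]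
  rw [h1, h2, h3, zpow_one]; ring

lemma aux : ∀ n (S : Finset ℤ), S.card = n → ∀ m : ℤ, (∀ i ∈ S, i ≤ m) →
    (∀ i ∈ S, i + 1 ∉ S) → ∑ i ∈ S, phi ^ i < phi ^ (m + 1) := by
  intro n
  induction n using Nat.strong_induction_on with
  | _ n ih =>
    intro S hcard m hle hcons
    rcases S.eq_empty_or_nonempty with rfl | hne
    · simpa using zpow_pos phi_pos (m + 1)
    · obtain ⟨a, ha, hamax⟩ := S.exists_max_image id hne
      have haS : a ≤ m := hle a ha
      have hsplit : S = insert a (S.erase a) := (Finset.insert_erase ha).symm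
      have hcard' : (S.erase a).card < n := by
        rw [← hcard]; exact Finset.card_erase_lt_of_mem ha
      have hle' : ∀ i ∈ S.erase a, i ≤ a - 2 := by
        intro i hi
        have hiS := Finset.mem_of_mem_erase hi
        have hia : i ≠ a := Finset.ne_of_mem_erase hi
        have h1 : i ≤ a := hamax i hiS
        have h2 : i ≠ a - 1 := by
          intro h
          have := hcons i hiS
          rw [h] at this
          simp at this
          exact this ha
        omega
      have hcons' : ∀ i ∈ S.erase a, i + 1 ∉ S.erase a := by
        intro i hi hmem
        exact hcons i (Finset.mem_of_mem_erase hi) (Finset.mem_of_mem_erase hmem)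
      have hrec : ∑ i ∈ S.erase a, phi ^ i < phi ^ (a - 1) := by
        have := ih _ hcard' (S.erase a) rfl (a - 2) hle' hcons'
        simpa [show a - 2 + 1 = a - 1 by ring] using this
      have hsum : ∑ i ∈ S, phi ^ i = phi ^ a + ∑ i ∈ S.erase a, phi ^ i := by
        exact (Finset.add_sum_erase S (fun i => phi ^ i) ha).symm
      have hmono : phi ^ (a + 1) ≤ phi ^ (m + 1) :=
        zpow_le_zpow_right₀ (le_of_lt one_lt_phi) (by omega)
      calc ∑ i ∈ S, phi ^ i = phi ^ a + ∑ i ∈ S.erase a, phi ^ i := hsum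
        _ < phi ^ a + phi ^ (a - 1) := by linarith
        _ = phi ^ (a + 1) := (phi_zpow_add_one a).symm
        _ ≤ phi ^ (m + 1) := hmono

/-- For a finite set `S` of negative integers with no two consecutive integers,
`∑_{i ∈ S} φ^i < 1`. -/
theorem sum_neg_powers_lt_one (S : Finset ℤ)
    (hneg : ∀ i ∈ S, i < 0) (hcons : ∀ i ∈ S, i + 1 ∉ S) :
    ∑ i ∈ S, phi ^ i < 1 := by
  have := aux S.card S rfl (-1) (fun i hi => by have := hneg i hi; omega) hcons
  simpa using this
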